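/- For any elements x, y of a Cayley-Dickson loop Q_n, the commutator [x,y] defined by xy = (yx)[x,y] equals -1 if x ∉ {±1}, y ∉ {±1}, and x ≠ ±y, and equals 1 otherwise. -/

import Mathlib

/-- The underlying set of the Cayley-Dickson loop `Q n`:
`Q 0 = {±1}` (encoded as `Bool`, `false = 1`, `true = -1`) and `Q (n+1) = Q n × Bool`,
an element `(x, b)` encoding `(x, 0)` if `b = false` and `(x, 1)` if `b = true`. -/
def Q : ℕ → Type
  | 0 => Bool
  | n+1 => Q n × Bool

namespace Q

def one : ∀ n, Q n
  | 0 => false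
  | n+1 => (one n, false)

def neg : ∀ n, Q n → Q n
  | 0, x => !x
  | n+1, (x, b) => (neg n x, b)

def conj : ∀ n, Q n → Q n
  | 0, x => x
  | n+1, (x, false) => (conj n x, false)
  | n+1, (x, true) => (neg n x, true)

/-- Cayley-Dickson doubling multiplication restricted to the loop:
`(x,0)(y,0) = (xy,0)`, `(x,0)(y,1) = (yx,1)`, `(x,1)(y,0) = (xy*,1)`, `(x,1)(y,1) = (-y*x,0)`. -/
def mul : ∀ n, Q n → Q n → Q n
  | 0, x, y => xor x y
  | n+1, (x, false), (y, false) => (mul n x y, false)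
  | n+1, (x, false), (y, true)  => (mul n y x, true)
  | n+1, (x, true),  (y, false) => (mul n x (conj n y), true)
  | n+1, (x, true),  (y, true)  => (neg n (mul n (conj n y) x), false)

instance (n : ℕ) : One (Q n) := ⟨one n⟩
instance (n : ℕ) : Neg (Q n) := ⟨neg n⟩
instance (n : ℕ) : Mul (Q n) := ⟨mul n⟩
instance (n : ℕ) : Star (Q n) := ⟨conj n⟩
/-- In `Q n` the inverse of `x` is its conjugate `x*`. -/
instance (n : ℕ) : Inv (Q n) := ⟨conj n⟩

instance instDecEq : ∀ n, DecidableEq (Q n)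
  | 0 => inferInstanceAs (DecidableEq Bool)
  | n+1 => letI := instDecEq n; inferInstanceAs (DecidableEq (Q n × Bool))

instance instFintype : ∀ n, Fintype (Q n)
  | 0 => inferInstanceAs (Fintype Bool)
  | n+1 => letI := instFintype n; inferInstanceAs (Fintype (Q n × Bool))

/-- Powers in `Q n` (well defined by diassociativity). -/
def pow {n : ℕ} (x : Q n) : ℕ → Q n
  | 0 => 1
  | k+1 => x * pow x k

/-- The embedding `x ↦ (x, 0)` of `Q n` into `Q (n+1)`. -/
def up {n : ℕ} (x : Q n) : Q (n+1) := (x, false)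

/-- The map `x ↦ (x, 1)` from `Q n` into `Q (n+1)`. -/
def up1 {n : ℕ} (x : Q n) : Q (n+1) := (x, true)

/-- The commutator `[x,y]`, defined by `xy = (yx)[x,y]`. -/
def comm {n : ℕ} (x y : Q n) : Q n := (y * x)⁻¹ * (x * y)

/-- The associator `[x,y,z]`, defined by `(xy)z = (x(yz))[x,y,z]`. -/
def assoc {n : ℕ} (x y z : Q n) : Q n := (x * (y * z))⁻¹ * ((x * y) * z)

/-- A subloop of the Cayley-Dickson loop `Q n`: a subset containing `1` and closed
under multiplication and inverses (= conjugates). -/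
structure Subloop (n : ℕ) where
  carrier : Set (Q n)
  one_mem : (1 : Q n) ∈ carrier
  mul_mem : ∀ ⦃x y : Q n⦄, x ∈ carrier → y ∈ carrier → x * y ∈ carrier
  inv_mem : ∀ ⦃x : Q n⦄, x ∈ carrier → x⁻¹ ∈ carrier

/-- The subloop of `Q n` generated by a set `s`. -/
def closure (n : ℕ) (s : Set (Q n)) : Set (Q n) :=
  ⋂₀ {t : Set (Q n) | s ⊆ t ∧ (1 : Q n) ∈ t ∧
      (∀ x ∈ t, ∀ y ∈ t, x * y ∈ t) ∧ (∀ x ∈ t, x⁻¹ ∈ t)}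

end Q

namespace Q

theorem neg_neg' : ∀ n (x : Q n), neg n (neg n x) = x
  | 0, x => Bool.not_not x
  | n+1, (x, b) => by simp [neg, neg_neg' n x] <;> rfl

theorem neg_ne : ∀ n (x : Q n), neg n x ≠ x
  | 0, x => by cases x <;> simp [neg] <;> exact fun h => Bool.noConfusion h
  | n+1, (x, b) => fun h => neg_ne n x (congrArg Prod.fst h)

theorem conj_one' : ∀ n, conj n (one n) = one n
  | 0 => rfl
  | n+1 => by simp [conj, one, conj_one' n] <;> rfl

theorem conj_neg' : ∀ n (x : Q n), conj n (neg n x) = neg n (conj n x)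
  | 0, x => rfl
  | n+1, (x, b) => by cases b <;> simp [conj, neg, conj_neg' n x, neg_neg' n x] <;> rfl

theorem mul_one' : ∀ n (x : Q n), mul n x (one n) = x
  | 0, x => Bool.xor_false x
  | n+1, (x, b) => by cases b <;> simp [mul, one, conj_one', mul_one' n x] <;> rfl

theorem one_mul' : ∀ n (x : Q n), mul n (one n) x = x
  | 0, x => Bool.false_xor x
  | n+1, (x, b) => by cases b <;> simp [mul, one, one_mul' n x, mul_one' n x] <;> rfl

theorem negmul : ∀ n (x y : Q n),
    mul n (neg n x) y = neg n (mul n x y) ∧ mul n x (neg n y) = neg n (mul n x y)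
  | 0, x, y => by constructor <;> (cases x <;> cases y <;> rfl)
  | n+1, (x, s), (y, t) => by
    have h1 : ∀ u v : Q n, mul n (neg n u) v = neg n (mul n u v) := fun u v => (negmul n u v).1
    have h2 : ∀ u v : Q n, mul n u (neg n v) = neg n (mul n u v) := fun u v => (negmul n u v).2
    cases s <;> cases t <;> constructor <;>
      simp [mul, neg, conj_neg', h1, h2, neg_neg'] <;> rfl

theorem conj_mul_self : ∀ n (x : Q n), mul n (conj n x) x = one n
  | 0, x => Bool.xor_self x
  | n+1, (x, b) => by
    have h2 : ∀ u v : Q n, mul n u (neg n v) = neg n (mul n u v) := fun u v => (negmul n u v).2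
    cases b <;> simp [mul, conj, one, h2, neg_neg', conj_mul_self n x] <;> rfl

theorem dich : ∀ n (x : Q n), x = one n ∨ x = neg n (one n) ∨ conj n x = neg n x
  | 0, false => Or.inl rfl
  | 0, true => Or.inr (Or.inl rfl)
  | n+1, (x, true) => Or.inr (Or.inr rfl)
  | n+1, (x, false) => by
    rcases dich n x with h | h | h
    · exact Or.inl (by simp [one, h] <;> rfl)
    · exact Or.inr (Or.inl (by simp [one, neg, h] <;> rfl))
    · exact Or.inr (Or.inr (by simp [conj, neg, h] <;> rfl))

def Pc (n : ℕ) (x y : Q n) : Prop :=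
  x = one n ∨ x = neg n (one n) ∨ y = one n ∨ y = neg n (one n) ∨ x = y ∨ x = neg n y

theorem pair_eq {n : ℕ} (a b : Q n) (s t : Bool) :
    @Eq (Q (n+1)) (a, s) (b, t) ↔ a = b ∧ s = t := Prod.ext_iff

theorem key : ∀ n (x y : Q n),
    (Pc n x y → mul n x y = mul n y x) ∧ (¬ Pc n x y → mul n x y = neg n (mul n y x))
  | 0, x, y => by
    constructor
    · intro _
      show xor x y = xor y x
      exact Bool.xor_comm x y
    · intro h
      exfalso; apply h
      cases x
      · exact Or.inl rfl
      · exact Or.inr (Or.inl rfl)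
  | n+1, (a, false), (b, false) => by
    have IH := key n a b
    have hPc : Pc (n+1) (a, false) (b, false) ↔ Pc n a b := by
      simp [Pc, one, neg, pair_eq]
    constructor
    · intro h
      simp only [mul, pair_eq, and_true]
      exact IH.1 (hPc.mp h)
    · intro h
      simp only [mul, neg, pair_eq, and_true]
      exact IH.2 (fun hp => h (hPc.mpr hp))
  | n+1, (a, false), (b, true) => by
    have h1 : ∀ u v : Q n, mul n (neg n u) v = neg n (mul n u v) := fun u v => (negmul n u v).1
    have h2 : ∀ u v : Q n, mul n u (neg n v) = neg n (mul n u v) := fun u v => (negmul n u v).2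
    have hPc : Pc (n+1) (a, false) (b, true) ↔ (a = one n ∨ a = neg n (one n)) := by
      simp [Pc, one, neg, pair_eq]
    constructor
    · intro h
      rcases hPc.mp h with h | h <;> subst h <;>
        simp [mul, pair_eq, conj_one', conj_neg', mul_one', h2]
    · intro h
      have ha : conj n a = neg n a := by
        rcases dich n a with h' | h' | h'
        · exact absurd (hPc.mpr (Or.inl h')) h
        · exact absurd (hPc.mpr (Or.inr h')) h
        · exact h'
      simp [mul, neg, pair_eq, ha, h2, neg_neg']
  | n+1, (a, true), (b, false) => by
    have h1 : ∀ u v : Q n, mul n (neg n u) v = neg n (mul n u v) := fun u v => (negmul n u v).1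
    have h2 : ∀ u v : Q n, mul n u (neg n v) = neg n (mul n u v) := fun u v => (negmul n u v).2
    have hPc : Pc (n+1) (a, true) (b, false) ↔ (b = one n ∨ b = neg n (one n)) := by
      simp [Pc, one, neg, pair_eq]
    constructor
    · intro h
      rcases hPc.mp h with h | h <;> subst h <;>
        simp [mul, pair_eq, conj_one', conj_neg', mul_one', h2]
    · intro h
      have hb : conj n b = neg n b := by
        rcases dich n b with h' | h' | h'
        · exact absurd (hPc.mpr (Or.inl h')) h
        · exact absurd (hPc.mpr (Or.inr h')) h
        · exact h'
      simp [mul, neg, pair_eq, hb, h2, neg_neg']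
  | n+1, (a, true), (b, true) => by
    have h1 : ∀ u v : Q n, mul n (neg n u) v = neg n (mul n u v) := fun u v => (negmul n u v).1
    have h2 : ∀ u v : Q n, mul n u (neg n v) = neg n (mul n u v) := fun u v => (negmul n u v).2
    have hPc : Pc (n+1) (a, true) (b, true) ↔ (a = b ∨ a = neg n b) := by
      simp [Pc, one, neg, pair_eq]
    constructor
    · intro h
      rcases hPc.mp h with h | h <;> subst h <;>
        simp [mul, pair_eq, conj_neg', h1, h2, neg_neg']
    · intro h
      have hab : a ≠ b := fun h' => h (hPc.mpr (Or.inl h'))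
      have hanb : a ≠ neg n b := fun h' => h (hPc.mpr (Or.inr h'))
      have main : neg n (mul n (conj n b) a) = mul n (conj n a) b := by
        rcases dich n a with ha | ha | ha
        · subst ha
          have hb : conj n b = neg n b := by
            rcases dich n b with h' | h' | h'
            · exact absurd h'.symm hab
            · exact absurd (by rw [h', neg_neg']) hanb
            · exact h'
          simp [hb, conj_one', mul_one', one_mul', h1, neg_neg']
        · subst ha
          have hb : conj n b = neg n b := by
            rcases dich n b with h' | h' | h'
            · refine absurd ?_ hanb
              rw [h']
            · exact absurd h'.symm hab
            · exact h'
          simp [hb, conj_neg', conj_one', h1, h2, mul_one', one_mul', neg_neg']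
        · rcases dich n b with hb | hb | hb
          · subst hb
            simp [ha, conj_one', mul_one', one_mul', h1]
          · subst hb
            simp [ha, conj_neg', conj_one', h1, h2, mul_one', one_mul', neg_neg']
          · have haone : a ≠ one n := by
              intro h'; subst h'
              rw [conj_one'] at ha
              exact neg_ne n (one n) ha.symm
            have hanegone : a ≠ neg n (one n) := by
              intro h'; subst h'
              rw [conj_neg', conj_one'] at ha
              exact neg_ne n (neg n (one n)) ha.symm
            have hbone : b ≠ one n := by
              intro h'; subst h'
              rw [conj_one'] at hb
              exact neg_ne n (one n) hb.symm
            have hbnegone : b ≠ neg n (one n) := by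
              intro h'; subst h'
              rw [conj_neg', conj_one'] at hb
              exact neg_ne n (neg n (one n)) hb.symm
            have hnP : ¬ Pc n a b := by
              rintro (h' | h' | h' | h' | h' | h')
              exacts [haone h', hanegone h', hbone h', hbnegone h', hab h', hanb h']
            have hIH := (key n a b).2 hnP
            rw [ha, hb, h1, h1, neg_neg', hIH, neg_neg']
      simp [mul, neg, pair_eq, neg_neg', main]
end Q

/-- For any elements `x, y` of a Cayley-Dickson loop `Q n`, the commutator `[x,y]`,
defined by `xy = (yx)[x,y]`, equals `-1` if `x ∉ {±1}`, `y ∉ {±1}` and `x ≠ ±y`,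
and equals `1` otherwise. -/
theorem Q.comm_eq (n : ℕ) (x y : Q n) :
    x * y = (y * x) * Q.comm x y ∧
    ((x ≠ 1 ∧ x ≠ -1 ∧ y ≠ 1 ∧ y ≠ -1 ∧ x ≠ y ∧ x ≠ -y) → Q.comm x y = -1) ∧
    (¬(x ≠ 1 ∧ x ≠ -1 ∧ y ≠ 1 ∧ y ≠ -1 ∧ x ≠ y ∧ x ≠ -y) → Q.comm x y = 1) := by
  have h2 : ∀ u v : Q n, Q.mul n u (Q.neg n v) = Q.neg n (Q.mul n u v) :=
    fun u v => (Q.negmul n u v).2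
  have hkey := Q.key n x y
  by_cases hP : Q.Pc n x y
  · have hc : Q.mul n x y = Q.mul n y x := hkey.1 hP
    have hcomm : Q.comm x y = Q.one n := by
      show Q.mul n (Q.conj n (Q.mul n y x)) (Q.mul n x y) = Q.one n
      rw [hc]; exact Q.conj_mul_self n (Q.mul n y x)
    refine ⟨?_, ?_, fun _ => hcomm⟩
    · show Q.mul n x y = Q.mul n (Q.mul n y x) (Q.comm x y)
      rw [hcomm, Q.mul_one']; exact hc
    · intro h
      exfalso
      obtain ⟨a1, a2, a3, a4, a5, a6⟩ := h
      have hP' : x = Q.one n ∨ x = Q.neg n (Q.one n) ∨ y = Q.one n ∨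
          y = Q.neg n (Q.one n) ∨ x = y ∨ x = Q.neg n y := hP
      rcases hP' with h | h | h | h | h | h
      exacts [a1 h, a2 h, a3 h, a4 h, a5 h, a6 h]
  · have hc : Q.mul n x y = Q.neg n (Q.mul n y x) := hkey.2 hP
    have hcomm : Q.comm x y = Q.neg n (Q.one n) := by
      show Q.mul n (Q.conj n (Q.mul n y x)) (Q.mul n x y) = Q.neg n (Q.one n)
      rw [hc, h2, Q.conj_mul_self]
    refine ⟨?_, fun _ => hcomm, ?_⟩
    · show Q.mul n x y = Q.mul n (Q.mul n y x) (Q.comm x y)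
      rw [hcomm, h2, Q.mul_one']; exact hc
    · intro h
      exfalso
      apply hP
      simp only [not_and_or, not_not] at h
      exact h
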